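/- Let E be an elliptic curve and suppose f = α⊗1 + β⊗δ ∈ End⁰(E)⊗F (δ² = -N) satisfies f^†f ∈ Q^× (i.e., f preserves the weak polarization). If α and β are both nonzero, then f = φ⊗z for some φ ∈ End⁰(E) and z ∈ F. Consequently, the group of F-linear quasi-isogenies of E⊗O_F preserving the weak polarization λ_I is {α⊗z : α ∈ (End⁰(E))^×, z ∈ F^×}. -/

import Mathlib

open scoped TensorProduct

/-- In a subsingleton monoid every element is a unit. -/
private lemma stmt14_aux_unit {A : Type*} [Ring A] [Algebra ℚ A] [NoZeroDivisors A]
    (v : A →+ A)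
    (hinv : ∀ a : A, v (v a) = a)
    (hdeg : ∀ a : A, ∃ r : ℚ, v a * a = algebraMap ℚ A r)
    (α : A) (t : ℚ) (ht : t ≠ 0) (h : v α * α = algebraMap ℚ A t) : IsUnit α := by
  rcases subsingleton_or_nontrivial A with hA | hA
  · exact isUnit_of_subsingleton α
  · have hAinj : Function.Injective (algebraMap ℚ A) := (algebraMap ℚ A).injective
    have hα : α ≠ 0 := by
      intro h0
      rw [h0, mul_zero] at h
      exact ht (hAinj (by rw [← h, map_zero]))
    have hleft : algebraMap ℚ A t⁻¹ * v α * α = 1 := by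
      rw [mul_assoc, h, ← map_mul, inv_mul_cancel₀ ht, map_one]
    obtain ⟨t', ht'⟩ := hdeg (v α)
    rw [hinv] at ht'
    have h2 : α * (v α * α) = (α * v α) * α := (mul_assoc _ _ _).symm
    rw [h, ht'] at h2
    have h3 : algebraMap ℚ A t * α = algebraMap ℚ A t' * α := by
      rw [Algebra.commutes t α]; exact h2
    have htt' : t = t' := hAinj (mul_right_cancel₀ hα h3)
    have hright : α * (algebraMap ℚ A t⁻¹ * v α) = 1 := by
      calc α * (algebraMap ℚ A t⁻¹ * v α)
          = (α * algebraMap ℚ A t⁻¹) * v α := by rw [mul_assoc]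
        _ = (algebraMap ℚ A t⁻¹ * α) * v α := by rw [← Algebra.commutes t⁻¹ α]
        _ = algebraMap ℚ A t⁻¹ * (α * v α) := by rw [mul_assoc]
        _ = algebraMap ℚ A t⁻¹ * algebraMap ℚ A t' := by rw [ht']
        _ = algebraMap ℚ A (t⁻¹ * t') := by rw [map_mul]
        _ = 1 := by rw [← htt', inv_mul_cancel₀ ht, map_one]
    exact ⟨⟨α, algebraMap ℚ A t⁻¹ * v α, hright, hleft⟩, rfl⟩

theorem stmt14 {A F : Type*} [Ring A] [Algebra ℚ A] [NoZeroDivisors A]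
    [Field F] [Algebra ℚ F]
    (N : ℕ) (hNpos : 0 < N) (hNsf : Squarefree N)
    (δ : F) (hδ : δ ^ 2 = -(N : F))
    (hbasis : ∀ x : F, ∃ a b : ℚ, x = algebraMap ℚ F a + algebraMap ℚ F b * δ)
    (σ : F ≃ₐ[ℚ] F) (hσ : σ δ = -δ)
    (v : A →+ A)
    (hanti : ∀ a b : A, v (a * b) = v b * v a)
    (hinv : ∀ a : A, v (v a) = a)
    (hdeg : ∀ a : A, ∃ r : ℚ, v a * a = algebraMap ℚ A r)
    (hfix : ∀ a : A, v a = a → ∃ r : ℚ, a = algebraMap ℚ A r)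
    (dag : A ⊗[ℚ] F →+ A ⊗[ℚ] F)
    (hdag : ∀ (a : A) (z : F), dag (a ⊗ₜ[ℚ] z) = v a ⊗ₜ[ℚ] σ z) :
    (∀ α β : A, α ≠ 0 → β ≠ 0 →
      (∃ r : ℚ, r ≠ 0 ∧
        dag (α ⊗ₜ[ℚ] 1 + β ⊗ₜ[ℚ] δ) * (α ⊗ₜ[ℚ] 1 + β ⊗ₜ[ℚ] δ)
          = algebraMap ℚ (A ⊗[ℚ] F) r) →
      ∃ (φ : A) (z : F), α ⊗ₜ[ℚ] (1 : F) + β ⊗ₜ[ℚ] δ = φ ⊗ₜ[ℚ] z) ∧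
    (∀ g : A ⊗[ℚ] F, IsUnit g →
      (∃ r : ℚ, r ≠ 0 ∧ dag g * g = algebraMap ℚ (A ⊗[ℚ] F) r) →
      ∃ (a : A) (z : F), IsUnit a ∧ z ≠ 0 ∧ g = a ⊗ₜ[ℚ] z) := by
  have hFinj : Function.Injective (algebraMap ℚ F) := (algebraMap ℚ F).injective
  -- δ is not rational
  have hδnotrat : ∀ c : ℚ, δ ≠ algebraMap ℚ F c := by
    intro c h
    have h1 : algebraMap ℚ F (c ^ 2) = algebraMap ℚ F (-(N : ℚ)) := by
      rw [map_pow, ← h, hδ, map_neg]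
      norm_num [map_natCast]
    have h2 : c ^ 2 = -(N : ℚ) := hFinj h1
    have : (0 : ℚ) < (N : ℚ) := by exact_mod_cast hNpos
    nlinarith [sq_nonneg c]
  -- 1 and δ are linearly independent over ℚ
  have hli : ∀ p q : ℚ, algebraMap ℚ F p + algebraMap ℚ F q * δ = 0 → p = 0 ∧ q = 0 := by
    intro p q h
    by_cases hq : q = 0
    · subst hq
      rw [map_zero, zero_mul, add_zero] at h
      exact ⟨hFinj (by rw [h, map_zero]), rfl⟩
    · exfalso
      have hqF : algebraMap ℚ F q ≠ 0 := fun h0 => hq (hFinj (by rw [h0, map_zero]))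
      have h3 : δ = algebraMap ℚ F (-p / q) := by
        rw [map_div₀, map_neg, eq_div_iff hqF]
        linear_combination h
      exact hδnotrat _ h3
  -- kernel lemma: a⊗1 + b⊗δ = 0 implies a = b = 0
  have hker : ∀ a b : A, a ⊗ₜ[ℚ] (1 : F) + b ⊗ₜ[ℚ] δ = 0 → a = 0 ∧ b = 0 := by
    have hind : LinearIndependent ℚ ![(1 : F), δ] := by
      rw [LinearIndependent.pair_iff]
      intro s t hst
      refine hli s t ?_
      rwa [Algebra.smul_def, Algebra.smul_def, mul_one] at hst
    have hspan : ⊤ ≤ Submodule.span ℚ (Set.range ![(1 : F), δ]) := by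
      intro x _
      have hr : Set.range ![(1 : F), δ] = {1, δ} := by
        ext y; simp [Fin.exists_fin_two]; tauto
      rw [hr]
      obtain ⟨p, q, hx⟩ := hbasis x
      refine Submodule.mem_span_pair.mpr ⟨p, q, ?_⟩
      rw [Algebra.smul_def, Algebra.smul_def, mul_one, hx]
    set B : Module.Basis (Fin 2) ℚ F := Module.Basis.mk hind hspan with hB
    have hB0 : B 0 = 1 := by simp [hB, Module.Basis.mk_apply]
    have hB1 : B 1 = δ := by simp [hB, Module.Basis.mk_apply]
    intro a b h
    let L : Fin 2 → (A ⊗[ℚ] F →ₗ[ℚ] A) := fun i =>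
      (TensorProduct.rid ℚ A).toLinearMap ∘ₗ LinearMap.lTensor A (B.coord i)
    have key : ∀ i : Fin 2, ∀ c : A, ∀ x : F, L i (c ⊗ₜ[ℚ] x) = B.coord i x • c := by
      intro i c x
      simp [L, LinearMap.lTensor_tmul, TensorProduct.rid_tmul]
    constructor
    · have := congrArg (L 0) h
      rw [map_add, map_zero, key, key, ← hB0, ← hB1] at this
      simp only [Module.Basis.coord_apply, Module.Basis.repr_self] at this
      simpa using this
    · have := congrArg (L 1) h
      rw [map_add, map_zero, key, key, ← hB0, ← hB1] at this
      simp only [Module.Basis.coord_apply, Module.Basis.repr_self] at this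
      simpa using this
  -- pair comparison
  have hpair : ∀ a b a' b' : A,
      a ⊗ₜ[ℚ] (1 : F) + b ⊗ₜ[ℚ] δ = a' ⊗ₜ[ℚ] (1 : F) + b' ⊗ₜ[ℚ] δ → a = a' ∧ b = b' := by
    intro a b a' b' h
    have h0 : (a - a') ⊗ₜ[ℚ] (1 : F) + (b - b') ⊗ₜ[ℚ] δ = 0 := by
      rw [TensorProduct.sub_tmul, TensorProduct.sub_tmul]
      rw [show a ⊗ₜ[ℚ] (1:F) - a' ⊗ₜ[ℚ] (1:F) + (b ⊗ₜ[ℚ] δ - b' ⊗ₜ[ℚ] δ)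
          = (a ⊗ₜ[ℚ] (1:F) + b ⊗ₜ[ℚ] δ) - (a' ⊗ₜ[ℚ] (1:F) + b' ⊗ₜ[ℚ] δ) from by abel, h,
        sub_self]
    obtain ⟨h1, h2⟩ := hker _ _ h0
    exact ⟨sub_eq_zero.mp h1, sub_eq_zero.mp h2⟩
  have hone : ∀ a b : A, a ⊗ₜ[ℚ] (1 : F) = b ⊗ₜ[ℚ] (1 : F) → a = b := by
    intro a b h
    exact (hpair a 0 b 0 (by rw [TensorProduct.zero_tmul, add_zero, add_zero, h])).1
  -- v kills no nonzero element
  have hv0 : ∀ a : A, a ≠ 0 → v a ≠ 0 := by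
    intro a ha h
    exact ha (by rw [← hinv a, h, map_zero])
  -- division helper
  have hdiv : ∀ (x : A) (w r : ℚ), w ≠ 0 → w • x = algebraMap ℚ A r →
      x = algebraMap ℚ A (r / w) := by
    intro x w r hw h
    rw [Algebra.smul_def] at h
    calc x = algebraMap ℚ A w⁻¹ * (algebraMap ℚ A w * x) := by
          rw [← mul_assoc, ← map_mul, inv_mul_cancel₀ hw, map_one, one_mul]
      _ = algebraMap ℚ A w⁻¹ * algebraMap ℚ A r := by rw [h]
      _ = algebraMap ℚ A (r / w) := by rw [← map_mul, inv_mul_eq_div]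
  -- δ * δ
  have hδδ : δ * δ = ((-(N : ℚ)) : ℚ) • (1 : F) := by
    rw [Algebra.smul_def, mul_one, map_neg, map_natCast]
    linear_combination hδ
  -- the core computation
  have core : ∀ α β : A, α ≠ 0 → β ≠ 0 →
      (∃ r : ℚ, r ≠ 0 ∧
        dag (α ⊗ₜ[ℚ] 1 + β ⊗ₜ[ℚ] δ) * (α ⊗ₜ[ℚ] 1 + β ⊗ₜ[ℚ] δ)
          = algebraMap ℚ (A ⊗[ℚ] F) r) →
      ∃ c : ℚ, β = algebraMap ℚ A c * α := by
    intro α β hα hβ ⟨r, hr0, hr⟩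
    haveI : Nontrivial A := nontrivial_of_ne α 0 hα
    have hAinj : Function.Injective (algebraMap ℚ A) := (algebraMap ℚ A).injective
    have hdagf : dag (α ⊗ₜ[ℚ] (1 : F) + β ⊗ₜ[ℚ] δ) = v α ⊗ₜ[ℚ] (1 : F) - v β ⊗ₜ[ℚ] δ := by
      rw [map_add, hdag, hdag, map_one, hσ, TensorProduct.tmul_neg, ← sub_eq_add_neg]
    rw [hdagf, Algebra.TensorProduct.algebraMap_apply, sub_mul, mul_add, mul_add] at hr
    rw [Algebra.TensorProduct.tmul_mul_tmul, Algebra.TensorProduct.tmul_mul_tmul,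
      Algebra.TensorProduct.tmul_mul_tmul, Algebra.TensorProduct.tmul_mul_tmul,
      one_mul, one_mul, mul_one] at hr
    rw [hδδ, ← TensorProduct.smul_tmul, neg_smul, TensorProduct.neg_tmul] at hr
    have h2 : (v α * α + (N : ℚ) • (v β * β)) ⊗ₜ[ℚ] (1 : F) + (v α * β - v β * α) ⊗ₜ[ℚ] δ
        = algebraMap ℚ A r ⊗ₜ[ℚ] (1 : F) + (0 : A) ⊗ₜ[ℚ] δ := by
      rw [TensorProduct.add_tmul, TensorProduct.sub_tmul, TensorProduct.zero_tmul,
        ← hr]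
      abel
    obtain ⟨e1, e2⟩ := hpair _ _ _ _ h2
    have hcom : v α * β = v β * α := sub_eq_zero.mp e2
    have hsymm : v (v α * β) = v α * β := by
      rw [hanti, hinv]; exact hcom.symm
    obtain ⟨s, hs⟩ := hfix _ hsymm
    obtain ⟨q, hq⟩ := hdeg α
    have hq0 : q ≠ 0 := by
      intro h0
      rw [h0, map_zero] at hq
      exact mul_ne_zero (hv0 α hα) hα hq
    have hkey : v α * (algebraMap ℚ A q * β - algebraMap ℚ A s * α) = 0 := by
      rw [mul_sub,
        show v α * (algebraMap ℚ A q * β) = algebraMap ℚ A q * (v α * β) from by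
          rw [← mul_assoc, ← Algebra.commutes q (v α), mul_assoc],
        show v α * (algebraMap ℚ A s * α) = algebraMap ℚ A s * (v α * α) from by
          rw [← mul_assoc, ← Algebra.commutes s (v α), mul_assoc],
        hs, hq, ← map_mul, ← map_mul, mul_comm q s, sub_self]
    have hzero : algebraMap ℚ A q * β - algebraMap ℚ A s * α = 0 := by
      rcases mul_eq_zero.mp hkey with h | h
      · exact absurd h (hv0 α hα)
      · exact h
    have h3 : algebraMap ℚ A q * β = algebraMap ℚ A s * α := sub_eq_zero.mp hzero
    refine ⟨s / q, ?_⟩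
    calc β = algebraMap ℚ A q⁻¹ * (algebraMap ℚ A q * β) := by
          rw [← mul_assoc, ← map_mul, inv_mul_cancel₀ hq0, map_one, one_mul]
      _ = algebraMap ℚ A q⁻¹ * (algebraMap ℚ A s * α) := by rw [h3]
      _ = algebraMap ℚ A (s / q) * α := by
          rw [← mul_assoc, ← map_mul, inv_mul_eq_div]
    -- done core
  -- rewriting as pure tensor
  have hpure : ∀ (α : A) (c : ℚ),
      α ⊗ₜ[ℚ] (1 : F) + (algebraMap ℚ A c * α) ⊗ₜ[ℚ] δ = α ⊗ₜ[ℚ] (1 + c • δ) := by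
    intro α c
    rw [TensorProduct.tmul_add, ← TensorProduct.smul_tmul, Algebra.smul_def]
  constructor
  · -- part 1
    intro α β hα hβ hr
    obtain ⟨c, hc⟩ := core α β hα hβ hr
    exact ⟨α, 1 + c • δ, by rw [hc, hpure]⟩
  · -- part 2
    intro g hgu hex
    obtain ⟨r, hr0, hrg⟩ := hex
    rcases subsingleton_or_nontrivial A with hA | hA
    · have h01 : (0 : A ⊗[ℚ] F) = 1 := by
        rw [show (1 : A ⊗[ℚ] F) = (1 : A) ⊗ₜ[ℚ] (1 : F) from rfl,
          Subsingleton.elim (1 : A) 0, TensorProduct.zero_tmul]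
      haveI := subsingleton_of_zero_eq_one h01
      exact ⟨1, 1, isUnit_one, one_ne_zero, Subsingleton.elim _ _⟩
    · have hAinj : Function.Injective (algebraMap ℚ A) := (algebraMap ℚ A).injective
      -- decompose g
      have hdec : ∃ a b : A, g = a ⊗ₜ[ℚ] 1 + b ⊗ₜ[ℚ] δ := by
        clear hrg hgu
        induction g using TensorProduct.induction_on with
        | zero => exact ⟨0, 0, by simp⟩
        | tmul a x =>
            obtain ⟨p, q, hx⟩ := hbasis x
            refine ⟨p • a, q • a, ?_⟩
            rw [hx, TensorProduct.tmul_add]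
            congr 1
            · rw [TensorProduct.smul_tmul, Algebra.smul_def, mul_one]
            · rw [TensorProduct.smul_tmul, Algebra.smul_def]
        | add x y hx hy =>
            obtain ⟨a, b, h1⟩ := hx; obtain ⟨c, d, h2⟩ := hy
            exact ⟨a + c, b + d, by
              rw [h1, h2, TensorProduct.add_tmul, TensorProduct.add_tmul]; abel⟩
      obtain ⟨α, β, hab⟩ := hdec
      by_cases hβ : β = 0
      · -- g = α ⊗ 1
        subst hβ
        rw [TensorProduct.zero_tmul, add_zero] at hab
        subst hab
        rw [hdag, map_one, Algebra.TensorProduct.tmul_mul_tmul, mul_one,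
          Algebra.TensorProduct.algebraMap_apply] at hrg
        have hvr : v α * α = algebraMap ℚ A r := hone _ _ hrg
        exact ⟨α, 1, stmt14_aux_unit v hinv hdeg α r hr0 hvr, one_ne_zero, rfl⟩
      · by_cases hα : α = 0
        · -- g = β ⊗ δ
          subst hα
          rw [TensorProduct.zero_tmul, zero_add] at hab
          subst hab
          rw [hdag, hσ, Algebra.TensorProduct.tmul_mul_tmul,
            Algebra.TensorProduct.algebraMap_apply] at hrg
          have hδδ' : -δ * δ = ((N : ℚ)) • (1 : F) := by
            rw [neg_mul, hδδ, neg_smul, neg_neg]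
          rw [hδδ', ← TensorProduct.smul_tmul] at hrg
          have hvr : (N : ℚ) • (v β * β) = algebraMap ℚ A r := hone _ _ hrg
          have hN0 : ((N : ℚ)) ≠ 0 := by exact_mod_cast hNpos.ne'
          have hvr' : v β * β = algebraMap ℚ A (r / N) := hdiv _ _ _ hN0 hvr
          have hδ0 : δ ≠ 0 := by
            intro h0
            exact hδnotrat 0 (by rw [h0, map_zero])
          exact ⟨β, δ, stmt14_aux_unit v hinv hdeg β (r / N)
            (div_ne_zero hr0 hN0) hvr', hδ0, rfl⟩
        · -- both nonzero
          subst hab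
          obtain ⟨c, hc⟩ := core α β hα hβ ⟨r, hr0, hrg⟩
          rw [hc, hpure] at hrg ⊢
          set z : F := 1 + c • δ with hz
          have hz0 : z ≠ 0 := by
            intro h0
            have : algebraMap ℚ F 1 + algebraMap ℚ F c * δ = 0 := by
              rw [map_one, ← Algebra.smul_def]; exact h0
            exact one_ne_zero (hli 1 c this).1
          have hσz : σ z * z = algebraMap ℚ F (1 + c ^ 2 * N) := by
            have h1 : σ z = 1 - c • δ := by
              rw [hz, map_add, map_one, map_smul, hσ, sub_eq_add_neg]; congr 1; rw [Algebra.smul_def, Algebra.smul_def, mul_neg]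
            rw [h1, hz]
            simp only [Algebra.smul_def, map_add, map_one, map_mul, map_pow, map_natCast]
            linear_combination (-(algebraMap ℚ F c) ^ 2) * hδ
          have hw0 : (1 + c ^ 2 * N : ℚ) ≠ 0 := by positivity
          rw [hdag, Algebra.TensorProduct.tmul_mul_tmul, hσz,
            Algebra.TensorProduct.algebraMap_apply,
            show algebraMap ℚ F (1 + c ^ 2 * N) = (1 + c ^ 2 * N : ℚ) • (1 : F) from by
              rw [Algebra.smul_def, mul_one],
            ← TensorProduct.smul_tmul] at hrg
          have hvr : (1 + c ^ 2 * N : ℚ) • (v α * α) = algebraMap ℚ A r := hone _ _ hrg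
          have hvr' : v α * α = algebraMap ℚ A (r / (1 + c ^ 2 * N)) := hdiv _ _ _ hw0 hvr
          exact ⟨α, z, stmt14_aux_unit v hinv hdeg α _ (div_ne_zero hr0 hw0) hvr', hz0, rfl⟩
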